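/- Let a ∈ ℂ and f(x,y) = x^4 + a x^2 y^2 + y^4. Then the Jacobian ideal Jac(f) = ⟨4x^3 + 2a x y^2, 2a x^2 y + 4 y^3⟩ contains a power of the maximal ideal ⟨x,y⟩ of ℂ[[x,y]] if and only if a^2 ≠ 4; in that case the Milnor number dim_ℂ ℂ[[x,y]]/Jac(f) equals 9. -/

import Mathlib

set_option synthInstance.maxHeartbeats 1000000
set_option maxHeartbeats 1000000

open MvPowerSeries
noncomputable section X9aux

abbrev R2 : Type := MvPowerSeries (Fin 2) ℂ

/-- exponent vector -/
def DD (i j : ℕ) : Fin 2 →₀ ℕ := Finsupp.single 0 i + Finsupp.single 1 j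

/-- monomial -/
def mon (i j : ℕ) (c : ℂ) : R2 := monomial (DD i j) c

@[simp] lemma DD_apply0 (i j : ℕ) : DD i j 0 = i := by simp [DD, Finsupp.single_apply]
@[simp] lemma DD_apply1 (i j : ℕ) : DD i j 1 = j := by simp [DD, Finsupp.single_apply]

lemma eq_DD (d : Fin 2 →₀ ℕ) : d = DD (d 0) (d 1) := by
  ext s; fin_cases s <;> simp

@[simp] lemma DD_inj (i j k l : ℕ) : DD i j = DD k l ↔ i = k ∧ j = l := by
  constructor
  · intro h
    constructor
    · have := congrArg (fun f => f 0) h; simpa using this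
    · have := congrArg (fun f => f 1) h; simpa using this
  · rintro ⟨rfl, rfl⟩; rfl

@[simp] lemma DD_le (i j k l : ℕ) : DD i j ≤ DD k l ↔ i ≤ k ∧ j ≤ l := by
  constructor
  · intro h
    exact ⟨by simpa using h 0, by simpa using h 1⟩
  · rintro ⟨h1, h2⟩
    intro s; fin_cases s <;> simpa
lemma DD_sub (i j k l : ℕ) : DD k l - DD i j = DD (k - i) (l - j) := by
  ext s; fin_cases s <;> simp [Finsupp.tsub_apply]

lemma DD_add (i j k l : ℕ) : DD i j + DD k l = DD (i + k) (j + l) := by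
  ext s; fin_cases s <;> simp

@[simp] lemma coeff_DD_mon (k l i j : ℕ) (c : ℂ) :
    coeff (DD k l) (mon i j c) = if k = i ∧ l = j then c else 0 := by
  rw [mon, coeff_monomial]
  congr 1
  · simp only [eq_iff_iff, DD_inj]


lemma mon_mul_mon (i j k l : ℕ) (c e : ℂ) :
    mon i j c * mon k l e = mon (i + k) (j + l) (c * e) := by
  rw [mon, mon, mon, monomial_mul_monomial, DD_add]

lemma coeff_mul_mon (k l i j : ℕ) (c : ℂ) (f : R2) :
    coeff (DD k l) (f * mon i j c) =
      if i ≤ k ∧ j ≤ l then coeff (DD (k - i) (l - j)) f * c else 0 := by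
  rw [mon, coeff_mul_monomial]
  rcases le_or_gt i k with hi | hi
  · rcases le_or_gt j l with hj | hj
    · rw [if_pos ((DD_le i j k l).2 ⟨hi, hj⟩), if_pos ⟨hi, hj⟩, DD_sub]
    · rw [if_neg, if_neg]
      · rintro ⟨_, h⟩; omega
      · intro h; have := (DD_le i j k l).1 h; omega
  · rw [if_neg, if_neg]
    · rintro ⟨h, _⟩; omega
    · intro h; have := (DD_le i j k l).1 h; omega

lemma mon_eq (i j : ℕ) (c : ℂ) : mon i j c = C (σ := Fin 2) (R := ℂ) c * X 0 ^ i * X 1 ^ j := by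
  rw [X_pow_eq, X_pow_eq]
  show mon i j c = monomial 0 c * _ * _
  rw [monomial_mul_monomial, monomial_mul_monomial, mul_one, mul_one, zero_add, mon, DD]

lemma C_eq_mon (c : ℂ) : C (σ := Fin 2) (R := ℂ) c = mon 0 0 c := by
  simp [mon_eq]

lemma X0_eq_mon : (X 0 : R2) = mon 1 0 1 := by simp [mon_eq]
lemma X1_eq_mon : (X 1 : R2) = mon 0 1 1 := by simp [mon_eq]



lemma span_pair_pow_le {A : Type*} [CommRing A] {x y : A} :
    ∀ (n : ℕ) (K : Ideal A), (∀ i j : ℕ, i + j = n → x ^ i * y ^ j ∈ K) →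
      Ideal.span {x, y} ^ n ≤ K
  | 0, K, h => by
      rw [pow_zero, Ideal.one_eq_top, top_le_iff, Ideal.eq_top_iff_one]
      simpa using h 0 0 rfl
  | (n+1), K, h => by
      rw [pow_succ]
      refine Ideal.mul_le.2 fun r hr s hs => ?_
      have hr' : r ∈ K.colon (Ideal.span {x}) ⊓ K.colon (Ideal.span {y}) :=
        span_pair_pow_le n _ (fun i j hij =>
          Submodule.mem_inf.2 ⟨Ideal.mem_colon_span_singleton.2 (by
              have := h (i+1) j (by omega); convert this using 1; ring),
            Ideal.mem_colon_span_singleton.2 (by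
              have := h i (j+1) (by omega); convert this using 1; ring)⟩) hr
      obtain ⟨c1, c2, rfl⟩ := Ideal.mem_span_pair.1 hs
      obtain ⟨hx', hy'⟩ := Submodule.mem_inf.1 hr'
      have hx2 : x * r ∈ K := by
        have := Ideal.mem_colon_span_singleton.1 hx'; rwa [mul_comm] at this
      have hy2 : y * r ∈ K := by
        have := Ideal.mem_colon_span_singleton.1 hy'; rwa [mul_comm] at this
      have : r * (c1 * x + c2 * y) = c1 * (x * r) + c2 * (y * r) := by ring
      rw [this]
      exact K.add_mem (Ideal.mul_mem_left _ _ hx2) (Ideal.mul_mem_left _ _ hy2)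

/-- the Jacobian ideal, statement form -/
def Jst (a : ℂ) : Ideal R2 :=
  Ideal.span {4 * X 0 ^ 3 + 2 * (C (σ := Fin 2) (R := ℂ) a) * X 0 * X 1 ^ 2,
          2 * (C (σ := Fin 2) (R := ℂ) a) * X 0 ^ 2 * X 1 + 4 * X 1 ^ 3}

lemma mem_of_C_mul {J : Ideal R2} {c : ℂ} (hc : c ≠ 0) {f : R2}
    (h : C (σ := Fin 2) (R := ℂ) c * f ∈ J) : f ∈ J := by
  have : f = C (σ := Fin 2) (R := ℂ) c⁻¹ * (C (σ := Fin 2) (R := ℂ) c * f) := by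
    rw [← mul_assoc, ← map_mul, inv_mul_cancel₀ hc, map_one, one_mul]
  rw [this]; exact Ideal.mul_mem_left _ _ h

lemma g1_mem (a : ℂ) : 4 * X 0 ^ 3 + 2 * (C (σ := Fin 2) (R := ℂ) a) * X 0 * X 1 ^ 2 ∈ Jst a :=
  Ideal.subset_span (by simp)
lemma g2_mem (a : ℂ) : 2 * (C (σ := Fin 2) (R := ℂ) a) * X 0 ^ 2 * X 1 + 4 * X 1 ^ 3 ∈ Jst a :=
  Ideal.subset_span (by simp)

lemma CC_num (n : ℕ) [n.AtLeastTwo] :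
    (C (σ := Fin 2) (R := ℂ)) (OfNat.ofNat n) = (OfNat.ofNat n : R2) := map_ofNat _ n

lemma mem31 (a : ℂ) (h : (16:ℂ) - 4*a^2 ≠ 0) : (X 0:R2)^3 * X 1 ∈ Jst a := by
  rw [Jst, Ideal.mem_span_pair]
  refine ⟨C (σ := Fin 2) (R := ℂ) (16-4*a^2)⁻¹ * (4 * X 1),
    -(C (σ := Fin 2) (R := ℂ) (16-4*a^2)⁻¹ * (2 * C (σ := Fin 2) (R := ℂ) a * X 0)), ?_⟩
  have hC : (C (σ := Fin 2) (R := ℂ)) (16-4*a^2) = 16 - 4 * (C (σ := Fin 2) (R := ℂ) a)^2 := by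
    rw [map_sub, map_mul, map_pow, CC_num, CC_num]
  have hu : C (σ := Fin 2) (R := ℂ) (16-4*a^2)⁻¹ * (16 - 4 * (C (σ := Fin 2) (R := ℂ) a)^2) = 1 := by
    rw [← hC, ← map_mul, inv_mul_cancel₀ h, map_one]
  linear_combination ((X 0:R2)^3 * X 1) * hu

lemma mem13 (a : ℂ) (h : (16:ℂ) - 4*a^2 ≠ 0) : (X 0:R2) * X 1^3 ∈ Jst a := by
  rw [Jst, Ideal.mem_span_pair]
  refine ⟨-(C (σ := Fin 2) (R := ℂ) (16-4*a^2)⁻¹ * (2 * C (σ := Fin 2) (R := ℂ) a * X 1)),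
    C (σ := Fin 2) (R := ℂ) (16-4*a^2)⁻¹ * (4 * X 0), ?_⟩
  have hC : (C (σ := Fin 2) (R := ℂ)) (16-4*a^2) = 16 - 4 * (C (σ := Fin 2) (R := ℂ) a)^2 := by
    rw [map_sub, map_mul, map_pow, CC_num, CC_num]
  have hu : C (σ := Fin 2) (R := ℂ) (16-4*a^2)⁻¹ * (16 - 4 * (C (σ := Fin 2) (R := ℂ) a)^2) = 1 := by
    rw [← hC, ← map_mul, inv_mul_cancel₀ h, map_one]
  linear_combination ((X 0:R2) * X 1^3) * hu

lemma mem50 (a : ℂ) (h : (16:ℂ) - 4*a^2 ≠ 0) : (X 0:R2)^5 ∈ Jst a := by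
  refine mem_of_C_mul (c := 4) (by norm_num) ?_
  have key : C (σ := Fin 2) (R := ℂ) 4 * (X 0:R2)^5 =
      X 0^2 * (4 * X 0 ^ 3 + 2 * (C (σ := Fin 2) (R := ℂ) a) * X 0 * X 1 ^ 2)
        - 2 * C (σ := Fin 2) (R := ℂ) a * (X 1 * ((X 0:R2)^3 * X 1)) := by
    have hC4 : (C (σ := Fin 2) (R := ℂ)) (4:ℂ) = (4:R2) := CC_num 4
    linear_combination ((X 0:R2)^5) * hC4
  rw [key]
  exact Ideal.sub_mem _ (Ideal.mul_mem_left _ _ (g1_mem a))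
    (Ideal.mul_mem_left _ _ (Ideal.mul_mem_left _ _ (mem31 a h)))

lemma mem05 (a : ℂ) (h : (16:ℂ) - 4*a^2 ≠ 0) : (X 1:R2)^5 ∈ Jst a := by
  refine mem_of_C_mul (c := 4) (by norm_num) ?_
  have key : C (σ := Fin 2) (R := ℂ) 4 * (X 1:R2)^5 =
      X 1^2 * (2 * (C (σ := Fin 2) (R := ℂ) a) * X 0 ^ 2 * X 1 + 4 * X 1 ^ 3)
        - 2 * C (σ := Fin 2) (R := ℂ) a * (X 0 * ((X 0:R2) * X 1^3)) := by
    have hC4 : (C (σ := Fin 2) (R := ℂ)) (4:ℂ) = (4:R2) := CC_num 4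
    linear_combination ((X 1:R2)^5) * hC4
  rw [key]
  exact Ideal.sub_mem _ (Ideal.mul_mem_left _ _ (g2_mem a))
    (Ideal.mul_mem_left _ _ (Ideal.mul_mem_left _ _ (mem13 a h)))

lemma partA (a : ℂ) (h4 : a^2 ≠ 4) :
    (Ideal.span {(X 0 : R2), X 1}) ^ 5 ≤ Jst a := by
  have hδ : (16:ℂ) - 4*a^2 ≠ 0 := by
    intro h0; exact h4 (by linear_combination (-(1:ℂ)/4) * h0)
  refine span_pair_pow_le 5 _ (fun i j hij => ?_)
  have hi : i ≤ 5 := by omega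
  interval_cases i
  · -- i = 0: j = 5
    have : j = 5 := by omega
    subst this; simpa using mem05 a hδ
  · have : j = 4 := by omega
    subst this
    have : (X 0:R2)^1 * X 1^4 = X 1 * (X 0 * X 1^3) := by ring
    rw [this]; exact Ideal.mul_mem_left _ _ (mem13 a hδ)
  · have : j = 3 := by omega
    subst this
    have : (X 0:R2)^2 * X 1^3 = X 0 * (X 0 * X 1^3) := by ring
    rw [this]; exact Ideal.mul_mem_left _ _ (mem13 a hδ)
  · have : j = 2 := by omega
    subst this
    have : (X 0:R2)^3 * X 1^2 = X 1 * (X 0^3 * X 1) := by ring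
    rw [this]; exact Ideal.mul_mem_left _ _ (mem31 a hδ)
  · have : j = 1 := by omega
    subst this
    have : (X 0:R2)^4 * X 1^1 = X 0 * (X 0^3 * X 1) := by ring
    rw [this]; exact Ideal.mul_mem_left _ _ (mem31 a hδ)
  · have : j = 0 := by omega
    subst this; simpa using mem50 a hδ



lemma single0_eq_DD (n : ℕ) : (Finsupp.single 0 n : Fin 2 →₀ ℕ) = DD n 0 := by
  ext s; fin_cases s <;> simp [DD, Finsupp.single_apply]

lemma X0_pow_mon (n : ℕ) : (X 0:R2)^n = mon n 0 1 := by
  rw [X_pow_eq, single0_eq_DD]; rfl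

lemma partC (a : ℂ) (h4 : a^2 = 4) (n : ℕ)
    (hle : (Ideal.span {(X 0 : R2), X 1}) ^ n ≤ Jst a) : False := by
  set ε : ℂ := a/2 with hεdef
  have ha : a = 2*ε := by rw [hεdef]; ring
  have hε2 : ε^2 = 1 := by
    rw [hεdef, div_pow, h4]; norm_num
  have hεne : ε ≠ 0 := by
    intro h; rw [h] at hε2; norm_num at hε2
  set q : R2 := X 0^2 + C (σ := Fin 2) (R := ℂ) ε * X 1^2 with hqdef
  have hCa : C (σ := Fin 2) (R := ℂ) a = 2 * C (σ := Fin 2) (R := ℂ) ε := by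
    rw [ha, map_mul, CC_num]
  have hCε2 : (C (σ := Fin 2) (R := ℂ) ε)^2 = 1 := by
    rw [← map_pow, hε2, map_one]
  have hJq : Jst a ≤ Ideal.span {q} := by
    rw [Jst, Ideal.span_le]
    rintro f (rfl | rfl)
    · refine Ideal.mem_span_singleton'.2 ⟨4 * X 0, ?_⟩
      rw [hqdef]
      linear_combination (-(2*(X 0:R2)*X 1^2)) * hCa
    · refine Ideal.mem_span_singleton'.2 ⟨4 * C (σ := Fin 2) (R := ℂ) ε * X 1, ?_⟩
      rw [hqdef]
      linear_combination (-(2*(X 0:R2)^2*X 1)) * hCa + 4*(X 1:R2)^3 * hCε2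
  have hXmem : (X 0:R2)^n ∈ Ideal.span {q} :=
    hJq (hle (Ideal.pow_mem_pow (Ideal.subset_span (by simp)) n))
  obtain ⟨H, hH⟩ := Ideal.mem_span_singleton'.1 hXmem
  have hqmon : q = mon 2 0 1 + mon 0 2 ε := by
    rw [hqdef]; simp only [mon_eq, map_one, one_mul, pow_zero, mul_one]
  have key : ∀ i j : ℕ, (if i = n ∧ j = 0 then (1:ℂ) else 0)
      = (if 2 ≤ i then coeff (DD (i-2) j) H else 0)
        + ε * (if 2 ≤ j then coeff (DD i (j-2)) H else 0) := by
    intro i j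
    have h1 := congrArg (coeff (DD i j)) hH
    rw [X0_pow_mon, coeff_DD_mon, hqmon, mul_add, map_add, coeff_mul_mon, coeff_mul_mon] at h1
    rw [← h1]
    have e1 : (if 2 ≤ i ∧ 0 ≤ j then coeff (DD (i-2) (j-0)) H * 1 else 0)
        = (if 2 ≤ i then coeff (DD (i-2) j) H else 0) := by
      by_cases hc : 2 ≤ i
      · rw [if_pos ⟨hc, Nat.zero_le j⟩, if_pos hc, mul_one, Nat.sub_zero]
      · rw [if_neg (fun hx => hc hx.1), if_neg hc]
    have e2 : (if 0 ≤ i ∧ 2 ≤ j then coeff (DD (i-0) (j-2)) H * ε else 0)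
        = ε * (if 2 ≤ j then coeff (DD i (j-2)) H else 0) := by
      by_cases hc : 2 ≤ j
      · rw [if_pos ⟨Nat.zero_le i, hc⟩, if_pos hc, Nat.sub_zero, mul_comm]
      · rw [if_neg (fun hx => hc hx.2), if_neg hc, mul_zero]
    rw [e1, e2]
  -- n ≥ 2
  have hn2 : 2 ≤ n := by
    by_contra hn
    have := key n 0
    rw [if_pos ⟨rfl, rfl⟩, if_neg (by omega), if_neg (by omega)] at this
    simp at this
  -- the chain
  have chain : ∀ k : ℕ, 2*k+2 ≤ n → coeff (DD (n - (2*k+2)) (2*k)) H = (-ε)^k := by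
    intro k
    induction k with
    | zero =>
      intro _
      have := key n 0
      rw [if_pos ⟨rfl, rfl⟩, if_pos hn2, if_neg (by omega)] at this
      simp only [mul_zero, add_zero] at this
      simpa using this.symm
    | succ k ih =>
      intro hk
      have hk' : 2*k+2 ≤ n := by omega
      have hstep := key (n - (2*k+2)) (2*k+2)
      rw [if_neg (by omega), if_pos (by omega), if_pos (by omega)] at hstep
      rw [show n - (2*k+2) - 2 = n - (2*(k+1)+2) by omega,
          show 2*k+2-2 = 2*k by omega, ih hk'] at hstep
      have h2 : coeff (DD (n - (2*(k+1)+2)) (2*k+2)) H = -(ε * (-ε)^k) := by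
        linear_combination -hstep
      have harg : DD (n - (2*(k+1)+2)) (2*(k+1)) = DD (n - (2*(k+1)+2)) (2*k+2) :=
        (DD_inj _ _ _ _).2 ⟨rfl, by ring⟩
      rw [harg, h2]; ring
  -- contradiction
  set K : ℕ := (n-2)/2 with hK
  have hK1 : 2*K+2 ≤ n := by omega
  have hK2 : n - (2*K+2) < 2 := by omega
  have := key (n - (2*K+2)) (2*K+2)
  rw [if_neg (by omega), if_neg (by omega), if_pos (by omega)] at this
  rw [show 2*K+2-2 = 2*K by omega, chain K hK1] at this
  simp only [zero_add] at this
  have : ε * (-ε)^K = 0 := this.symm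
  exact (mul_ne_zero hεne (pow_ne_zero _ (neg_ne_zero.2 hεne))) this

lemma single1_eq_DD (n : ℕ) : (Finsupp.single 1 n : Fin 2 →₀ ℕ) = DD 0 n := by
  ext s; fin_cases s <;> simp [DD, Finsupp.single_apply]

lemma X1_pow_mon (n : ℕ) : (X 1:R2)^n = mon 0 n 1 := by
  rw [X_pow_eq, single1_eq_DD]; rfl

lemma mem_pow_of_coeff :
    ∀ (n : ℕ) (f : R2), (∀ d : Fin 2 →₀ ℕ, d 0 + d 1 < n → coeff d f = 0) →
      f ∈ (Ideal.span {(X 0 : R2), X 1}) ^ n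
  | 0, f, _ => by simp
  | (n+1), f, hf => by
    set g : R2 := fun d => f (d + DD 1 0) with hg
    set k : R2 := fun d => if d 0 = 0 then f (d + DD 0 (n+1)) else 0 with hk
    have hcg : ∀ e : Fin 2 →₀ ℕ, coeff e g = f (e + DD 1 0) := fun e => rfl
    have hck : ∀ e : Fin 2 →₀ ℕ, coeff e k =
        if e 0 = 0 then f (e + DD 0 (n+1)) else 0 := fun e => rfl
    have hsplit : f = X 0 * g + X 1 ^ (n+1) * k := by
      ext d
      rw [eq_DD d]
      set i := d 0; set j := d 1
      rw [map_add, X0_eq_mon, X1_pow_mon, mul_comm (mon 1 0 1) g, mul_comm (mon 0 (n+1) 1) k,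
        coeff_mul_mon, coeff_mul_mon]
      by_cases hi : 1 ≤ i
      · rw [if_pos ⟨hi, Nat.zero_le j⟩, hcg, DD_add]
        rw [show i - 1 + 1 = i by omega, Nat.sub_zero, add_zero, mul_one]
        by_cases hj : n+1 ≤ j
        · rw [if_pos ⟨Nat.zero_le i, hj⟩, hck]
          rw [show (DD (i - 0) (j - (n+1))) 0 = i - 0 from DD_apply0 _ _]
          rw [if_neg (by omega), zero_mul, add_zero, coeff_apply]
        · rw [if_neg (fun hx => hj hx.2), add_zero, coeff_apply]
      · have hi0 : i = 0 := by omega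
        rw [if_neg (fun hx => hi hx.1), zero_add]
        by_cases hj : n+1 ≤ j
        · rw [if_pos ⟨Nat.zero_le i, hj⟩, hck]
          rw [show (DD (i - 0) (j - (n+1))) 0 = i - 0 from DD_apply0 _ _]
          rw [if_pos (by omega), DD_add, mul_one, coeff_apply]
          congr 2
          omega
        · rw [if_neg (fun hx => hj hx.2), coeff_apply]
          have := hf (DD i j) (by simp; omega)
          rw [coeff_apply] at this
          exact this
    have hgmem : g ∈ (Ideal.span {(X 0 : R2), X 1}) ^ n := by
      refine mem_pow_of_coeff n g (fun d hd => ?_)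
      rw [hcg]
      have := hf (d + DD 1 0) (by simp [Finsupp.add_apply]; omega)
      rw [coeff_apply] at this
      exact this
    rw [hsplit, pow_succ']
    refine Ideal.add_mem _ ?_ ?_
    · exact Ideal.mul_mem_mul (Ideal.subset_span (by simp)) hgmem
    · have hx1 : (X 1:R2)^(n+1) ∈ (Ideal.span {(X 0 : R2), X 1}) ^ (n+1) :=
        Ideal.pow_mem_pow (Ideal.subset_span (by simp)) _
      rw [pow_succ'] at hx1
      exact Ideal.mul_mem_right _ _ hx1


/-- the nine linear functionals -/
def phiV (a : ℂ) : Fin 9 → (R2 →ₗ[ℂ] ℂ) :=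
    ![coeff (DD 0 0), coeff (DD 1 0), coeff (DD 0 1),
      coeff (DD 2 0), coeff (DD 1 1), coeff (DD 0 2),
      coeff (DD 2 1) - (a/2) • coeff (DD 0 3),
      coeff (DD 1 2) - (a/2) • coeff (DD 3 0),
      coeff (DD 2 2) - (a/2) • coeff (DD 4 0) - (a/2) • coeff (DD 0 4)]

@[simp] lemma phiV_0 (a : ℂ) : phiV a 0 = coeff (DD 0 0) := rfl
@[simp] lemma phiV_1 (a : ℂ) : phiV a 1 = coeff (DD 1 0) := rfl
@[simp] lemma phiV_2 (a : ℂ) : phiV a 2 = coeff (DD 0 1) := rfl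
@[simp] lemma phiV_3 (a : ℂ) : phiV a 3 = coeff (DD 2 0) := rfl
@[simp] lemma phiV_4 (a : ℂ) : phiV a 4 = coeff (DD 1 1) := rfl
@[simp] lemma phiV_5 (a : ℂ) : phiV a 5 = coeff (DD 0 2) := rfl
@[simp] lemma phiV_6 (a : ℂ) : phiV a 6 = coeff (DD 2 1) - (a/2) • coeff (DD 0 3) := rfl
@[simp] lemma phiV_7 (a : ℂ) : phiV a 7 = coeff (DD 1 2) - (a/2) • coeff (DD 3 0) := rfl
@[simp] lemma phiV_8 (a : ℂ) :
    phiV a 8 = coeff (DD 2 2) - (a/2) • coeff (DD 4 0) - (a/2) • coeff (DD 0 4) := rfl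

def phi (a : ℂ) : R2 →ₗ[ℂ] (Fin 9 → ℂ) := LinearMap.pi (phiV a)

lemma phi_surj (a : ℂ) : Function.Surjective (phi a) := by
  intro v
  refine ⟨mon 0 0 (v 0) + mon 1 0 (v 1) + mon 0 1 (v 2) + mon 2 0 (v 3) + mon 1 1 (v 4)
    + mon 0 2 (v 5) + mon 2 1 (v 6) + mon 1 2 (v 7) + mon 2 2 (v 8), ?_⟩
  funext k
  fin_cases k <;>
    simp [phi, LinearMap.pi_apply, map_add, coeff_DD_mon]

lemma G1_mon (a : ℂ) : 4 * X 0 ^ 3 + 2 * (C (σ := Fin 2) (R := ℂ) a) * X 0 * X 1 ^ 2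
    = mon 3 0 4 + mon 1 2 (2*a) := by
  simp only [mon_eq, map_mul, map_ofNat, pow_zero, mul_one, pow_one]
  try ring

lemma G2_mon (a : ℂ) : 2 * (C (σ := Fin 2) (R := ℂ) a) * X 0 ^ 2 * X 1 + 4 * X 1 ^ 3
    = mon 2 1 (2*a) + mon 0 3 4 := by
  simp only [mon_eq, map_mul, map_ofNat, pow_zero, mul_one, pow_one, one_mul]
  try ring

lemma phi_mul_g1 (a : ℂ) (h : R2) :
    phi a (h * (mon 3 0 4 + mon 1 2 (2*a))) = 0 := by
  funext k
  fin_cases k <;>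
    simp [phi, LinearMap.pi_apply, mul_add, coeff_mul_mon] <;> ring

lemma phi_mul_g2 (a : ℂ) (h : R2) :
    phi a (h * (mon 2 1 (2*a) + mon 0 3 4)) = 0 := by
  funext k
  fin_cases k <;>
    simp [phi, LinearMap.pi_apply, mul_add, coeff_mul_mon] <;> ring

lemma J_le_ker (a : ℂ) : ∀ f ∈ Jst a, phi a f = 0 := by
  intro f hf
  rw [Jst, Ideal.mem_span_pair] at hf
  obtain ⟨h1, h2, rfl⟩ := hf
  rw [map_add, G1_mon, G2_mon, phi_mul_g1, phi_mul_g2, add_zero]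

lemma ker_le_J (a : ℂ) (h4 : a^2 ≠ 4) (f : R2) (hf : phi a f = 0) : f ∈ Jst a := by
  have hδ : (16:ℂ) - 4*a^2 ≠ 0 := fun h0 => h4 (by linear_combination (-(1:ℂ)/4) * h0)
  have hδ2 : (16 - a^2*4 : ℂ) ≠ 0 := by
    intro h0; exact hδ (by linear_combination h0)
  have hu : (16 - a^2*4 : ℂ) * (16 - a^2*4)⁻¹ = 1 := mul_inv_cancel₀ hδ2
  have e0 : coeff (DD 0 0) f = 0 := by simpa [phi, LinearMap.pi_apply] using congrFun hf 0
  have e1 : coeff (DD 1 0) f = 0 := by simpa [phi, LinearMap.pi_apply] using congrFun hf 1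
  have e2 : coeff (DD 0 1) f = 0 := by simpa [phi, LinearMap.pi_apply] using congrFun hf 2
  have e3 : coeff (DD 2 0) f = 0 := by simpa [phi, LinearMap.pi_apply] using congrFun hf 3
  have e4 : coeff (DD 1 1) f = 0 := by simpa [phi, LinearMap.pi_apply] using congrFun hf 4
  have e5 : coeff (DD 0 2) f = 0 := by simpa [phi, LinearMap.pi_apply] using congrFun hf 5
  have e6 : coeff (DD 2 1) f - a/2 * coeff (DD 0 3) f = 0 := by
    simpa [phi, LinearMap.pi_apply] using congrFun hf 6
  have e7 : coeff (DD 1 2) f - a/2 * coeff (DD 3 0) f = 0 := by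
    simpa [phi, LinearMap.pi_apply] using congrFun hf 7
  have e8 : coeff (DD 2 2) f - a/2 * coeff (DD 4 0) f - a/2 * coeff (DD 0 4) f = 0 := by
    simpa [phi, LinearMap.pi_apply] using congrFun hf 8
  set P : R2 :=
    (mon 0 0 (coeff (DD 3 0) f/4) + mon 1 0 (coeff (DD 4 0) f/4)
      + mon 0 1 ((4*coeff (DD 3 1) f - 2*a*coeff (DD 1 3) f)/(16-4*a^2)))
        * (mon 3 0 4 + mon 1 2 (2*a))
    + (mon 0 0 (coeff (DD 0 3) f/4)
      + mon 1 0 ((4*coeff (DD 1 3) f - 2*a*coeff (DD 3 1) f)/(16-4*a^2))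
      + mon 0 1 (coeff (DD 0 4) f/4))
        * (mon 2 1 (2*a) + mon 0 3 4) with hPdef
  have hPJ : P ∈ Jst a := by
    rw [Jst]
    exact Ideal.mem_span_pair.2 ⟨_, _, by rw [G1_mon, G2_mon]⟩
  have key : ∀ i j : ℕ, i + j < 5 → coeff (DD i j) (f - P) = 0 := by
    intro i j hij
    have hi : i ≤ 4 := by omega
    interval_cases i <;>
      [ (have hj : j ≤ 4 := by omega); (have hj : j ≤ 3 := by omega);
        (have hj : j ≤ 2 := by omega); (have hj : j ≤ 1 := by omega);
        (have hj : j ≤ 0 := by omega)] <;>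
      interval_cases j <;>
      simp only [map_sub, hPdef, mul_add, add_mul, map_add, mon_mul_mon, coeff_DD_mon,
        Nat.reduceAdd, Nat.reduceMul] <;>
      norm_num <;>
      first
        | linear_combination e0
        | linear_combination e1
        | linear_combination e2
        | linear_combination e3
        | linear_combination e4
        | linear_combination e5
        | linear_combination e6
        | linear_combination e7
        | linear_combination e8
        | ring1
        | linear_combination -coeff (DD 3 1) f * hu
        | linear_combination -coeff (DD 1 3) f * hu
        | (field_simp; ring)
  have hfP : f - P ∈ (Ideal.span {(X 0 : R2), X 1}) ^ 5 := by
    refine mem_pow_of_coeff 5 _ (fun d hd => ?_)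
    have := key (d 0) (d 1) (by omega)
    rwa [← eq_DD d] at this
  have hm5 : f - P ∈ Jst a := by
    have hδ' : a^2 ≠ 4 := h4
    exact partA a hδ' hfP
  have : f = (f - P) + P := by ring
  rw [this]
  exact Ideal.add_mem _ hm5 hPJ


lemma X9_main (a : ℂ) :
    ((∃ n : ℕ, (Ideal.span {(X 0 : MvPowerSeries (Fin 2) ℂ), X 1}) ^ n ≤ Jst a) ↔ a ^ 2 ≠ 4) ∧
    (a ^ 2 ≠ 4 → Module.finrank ℂ (MvPowerSeries (Fin 2) ℂ ⧸ Jst a) = 9) := by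
  constructor
  · constructor
    · rintro ⟨n, hn⟩ h4
      exact partC a h4 n hn
    · intro h4
      exact ⟨5, partA a h4⟩
  · intro h4
    have hsurj := phi_surj a
    have hker : LinearMap.ker (phi a) = Submodule.restrictScalars ℂ (Jst a) := by
      ext f
      simp only [LinearMap.mem_ker, Submodule.restrictScalars_mem]
      exact ⟨fun h => ker_le_J a h4 f h, fun h => J_le_ker a f h⟩
    have e1 : (R2 ⧸ Submodule.restrictScalars ℂ (Jst a)) ≃ₗ[ℂ] (Fin 9 → ℂ) :=
      (Submodule.quotEquivOfEq _ _ hker.symm).trans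
        (LinearMap.quotKerEquivOfSurjective _ hsurj)
    have e2 : (R2 ⧸ Jst a) ≃ₗ[ℂ] (Fin 9 → ℂ) :=
      ((Submodule.Quotient.restrictScalarsEquiv ℂ
        ((Jst a : Ideal R2) : Submodule R2 R2))).symm.trans e1
    rw [e2.finrank_eq, Module.finrank_fin_fun]

end X9aux

/-- For `f = x⁴ + a x² y² + y⁴` (type `X₉`), the Jacobian ideal contains a power of the
maximal ideal iff `a² ≠ 4`, and in that case the Milnor number is `9`. -/
theorem X9_isolated_iff (a : ℂ) :
    ((∃ n : ℕ, (Ideal.span {(X 0 : MvPowerSeries (Fin 2) ℂ), X 1}) ^ n ≤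
        Ideal.span {4 * X 0 ^ 3 + 2 * (C (σ := Fin 2) (R := ℂ) a) * X 0 * X 1 ^ 2,
          2 * (C (σ := Fin 2) (R := ℂ) a) * X 0 ^ 2 * X 1 + 4 * X 1 ^ 3}) ↔ a ^ 2 ≠ 4) ∧
    (a ^ 2 ≠ 4 →
      Module.finrank ℂ
        (MvPowerSeries (Fin 2) ℂ ⧸
          Ideal.span {4 * X 0 ^ 3 + 2 * (C (σ := Fin 2) (R := ℂ) a) * X 0 * X 1 ^ 2,
            2 * (C (σ := Fin 2) (R := ℂ) a) * X 0 ^ 2 * X 1 + 4 * X 1 ^ 3}) = 9) := by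
  exact X9_main a
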